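/- For every prime p not dividing 15, the number of points (including the point at infinity) on the elliptic curve y² + xy + y = x³ + x² - 10x - 10 over the field with p elements is divisible by 4. -/

import Mathlib

open WeierstrassCurve WeierstrassCurve.Affine

noncomputable section

/-- The curve y² + xy + y = x³ + x² - 10x - 10 over ZMod p. -/
def Wc (p : ℕ) : WeierstrassCurve.Affine (ZMod p) :=
  { a₁ := 1, a₂ := 1, a₃ := 1, a₄ := -10, a₆ := -10 }

theorem stmt_2 (p : ℕ) (hp : p.Prime) (h : ¬ (p ∣ 15)) :
    4 ∣ Nat.card {P : ZMod p × ZMod p //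
      P.2 ^ 2 + P.1 * P.2 + P.2 = P.1 ^ 3 + P.1 ^ 2 - 10 * P.1 - 10} + 1 := by
  rcases eq_or_ne p 2 with rfl | h2
  · rw [Nat.card_eq_fintype_card]; decide
  haveI := Fact.mk hp
  haveI : NeZero p := ⟨hp.pos.ne'⟩
  have h3 : p ≠ 3 := fun hh => h (hh ▸ ⟨5, rfl⟩)
  have h5 : p ≠ 5 := fun hh => h (hh ▸ ⟨3, rfl⟩)
  -- cast facts
  have hcast : ∀ n : ℕ, n ≠ 0 → (∀ q : ℕ, q.Prime → q ∣ n → q ∣ 15 ∨ q = 2) →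
      (n : ZMod p) ≠ 0 := by
    intro n hn hq h0
    rw [ZMod.natCast_eq_zero_iff] at h0
    rcases hq p hp h0 with hd | hd
    · exact h hd
    · exact h2 hd
  have hΔ : (Wc p).Δ ≠ 0 := by
    have : (Wc p).Δ = ((50625 : ℕ) : ZMod p) := by
      simp only [WeierstrassCurve.Δ, WeierstrassCurve.b₂, WeierstrassCurve.b₄,
        WeierstrassCurve.b₆, WeierstrassCurve.b₈, Wc]
      norm_num
    rw [this]
    apply hcast 50625 (by norm_num)
    intro q hq hdvd
    left
    exact hq.dvd_of_dvd_pow (n := 4) ((by norm_num : (15:ℕ)^4 = 50625) ▸ hdvd)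
  -- the two rational 2-torsion points
  have h1 : (Wc p).Nonsingular (-1) 0 :=
    (equation_iff_nonsingular_of_Δ_ne_zero (W := Wc p) hΔ).mp (by rw [equation_iff]; simp only [Wc]; ring)
  have hT2eq : (Wc p).Nonsingular 3 (-2) :=
    (equation_iff_nonsingular_of_Δ_ne_zero (W := Wc p) hΔ).mp (by rw [equation_iff]; simp only [Wc]; ring)
  set T1 : (Wc p).Point := Point.some _ _ h1 with hT1def
  set T2 : (Wc p).Point := Point.some _ _ hT2eq with hT2def
  have hT1 : T1 + T1 = 0 := Point.add_self_of_Y_eq (by simp only [Wc, negY]; ring)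
  have hT2 : T2 + T2 = 0 := Point.add_self_of_Y_eq (by simp only [Wc, negY]; ring)
  have hx13 : (-1 : ZMod p) ≠ 3 := by
    intro hh
    have h4 : ((4 : ℕ) : ZMod p) = 0 := by push_cast; linear_combination -hh
    rw [ZMod.natCast_eq_zero_iff] at h4
    have hp2 : p ∣ 2 := hp.dvd_of_dvd_pow (n := 2) (by norm_num [h4] : p ∣ 2 ^ 2)
    exact h2 ((Nat.prime_dvd_prime_iff_eq hp Nat.prime_two).mp hp2)
  have hne : T1 ≠ T2 := by
    intro heq
    rw [hT1def, hT2def] at heq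
    injection heq with hx _
    exact hx13 hx
  have hT1T2 : T1 + T2 ≠ 0 := by
    rw [hT1def, hT2def, Point.add_of_X_ne hx13]
    exact Point.some_ne_zero _
  -- Klein four subgroup
  let f1 : ZMod 2 →+ (Wc p).Point :=
    ZMod.lift 2 ⟨zmultiplesHom _ T1, by
      show ((2 : ℕ) : ℤ) • T1 = 0
      rw [show ((2 : ℕ) : ℤ) = (2 : ℤ) by norm_num, two_zsmul, hT1]⟩
  let f2 : ZMod 2 →+ (Wc p).Point :=
    ZMod.lift 2 ⟨zmultiplesHom _ T2, by
      show ((2 : ℕ) : ℤ) • T2 = 0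
      rw [show ((2 : ℕ) : ℤ) = (2 : ℤ) by norm_num, two_zsmul, hT2]⟩
  have ef1 : f1 1 = T1 := by
    rw [show (1 : ZMod 2) = ((1 : ℤ) : ZMod 2) by norm_cast, ZMod.lift_coe]
    simp
  have ef2 : f2 1 = T2 := by
    rw [show (1 : ZMod 2) = ((1 : ℤ) : ZMod 2) by norm_cast, ZMod.lift_coe]
    simp
  let f : ZMod 2 × ZMod 2 →+ (Wc p).Point := f1.coprod f2
  have finj : Function.Injective f := by
    rw [injective_iff_map_eq_zero]
    rintro ⟨a, b⟩ ha
    fin_cases a <;> fin_cases b <;>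
      simp only [f, AddMonoidHom.coprod_apply, Fin.mk_zero, Fin.mk_one, Fin.isValue, ef1, ef2, map_zero, add_zero, zero_add] at ha ⊢
    · rfl
    · exact absurd ha (by change ¬ ((f1 0 + f2 1 : (Wc p).Point) = 0); rw [map_zero, zero_add, ef2, hT2def]; exact Point.some_ne_zero _)
    · exact absurd ha (by change ¬ ((f1 1 + f2 0 : (Wc p).Point) = 0); rw [map_zero, add_zero, ef1, hT1def]; exact Point.some_ne_zero _)
    · exact absurd ha hT1T2
  have hdvd4 : 4 ∣ Nat.card (Wc p).Point := by
    have hd := AddSubgroup.card_dvd_of_injective f finj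
    have : Nat.card (ZMod 2 × ZMod 2) = 4 := by
      rw [Nat.card_prod, Nat.card_zmod]
    rwa [this] at hd
  -- counting
  have e1 : {P : ZMod p × ZMod p //
      P.2 ^ 2 + P.1 * P.2 + P.2 = P.1 ^ 3 + P.1 ^ 2 - 10 * P.1 - 10} ≃
      {P : ZMod p × ZMod p // (Wc p).Nonsingular P.1 P.2} :=
    Equiv.subtypeEquivRight (by
      intro P
      constructor
      · intro hP
        refine (equation_iff_nonsingular_of_Δ_ne_zero (W := Wc p) hΔ).mp ?_
        rw [equation_iff]; simp only [Wc]; linear_combination hP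
      · intro hP
        have heq := hP.1
        rw [equation_iff] at heq
        simp only [Wc] at heq
        linear_combination heq)
  have e2 : Option {P : ZMod p × ZMod p // (Wc p).Nonsingular P.1 P.2} ≃ (Wc p).Point :=
    { toFun := fun o => match o with
        | none => 0
        | some ⟨⟨x, y⟩, hxy⟩ => Point.some _ _ hxy
      invFun := fun P => match P with
        | .zero => none
        | Point.some x y hxy => some ⟨(x, y), hxy⟩
      left_inv := by rintro (_ | ⟨⟨x, y⟩, hxy⟩) <;> rfl
      right_inv := by rintro (_ | @⟨x, y, hxy⟩) <;> rfl }
  have hcard : Nat.card (Wc p).Point = Nat.card {P : ZMod p × ZMod p //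
      P.2 ^ 2 + P.1 * P.2 + P.2 = P.1 ^ 3 + P.1 ^ 2 - 10 * P.1 - 10} + 1 := by
    rw [← Nat.card_congr e2, Finite.card_option, ← Nat.card_congr e1]
  rw [← hcard]
  exact hdvd4

end
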